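/- (Algebraic core of Theorem 5.2(1)) Let χ = (χ_0,…,χ_n) be a normalized divisive weight vector. Let Γ = {(g_0,…,g_n) ∈ (S^±_ℤ(α))^{n+1} : for all 0 ≤ j < i ≤ n, the element 1 − α_{n−j}·α_{n−i}^{−χ_{n−j}/χ_{n−i}} divides g_i − g_j}, with the convention α_0 = 1. Then the map h sending g ∈ Γ to the family whose component at a nonempty subset A ⊆ {0,…,n} is the class of g_{n − min A} in S^±_ℤ(α)/J_A is well defined (for all a, a' ∈ A one has g_{n−a} ≡ g_{n−a'} mod J_A), and h is a ring isomorphism from Γ onto the ring P_K(α;Σ_χ) of integral piecewise Laurent polynomials on Σ_χ. -/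

import Mathlib

set_option synthInstance.maxHeartbeats 400000

noncomputable section

/-- The Laurent polynomial ring `S^±_ℤ(α) = ℤ[α₁^{±1},…,αₙ^{±1}]`, realised as the
group algebra of `ℤⁿ` over `ℤ`; the monomial `α^J` is `AddMonoidAlgebra.single J 1`. -/
abbrev LaurentZ (n : ℕ) := AddMonoidAlgebra ℤ (Fin n → ℤ)

/-- The value `χ_k` of a weight vector at a natural-number index `k ≤ n`
(junk value `1` for `k > n`). -/
def chN (n : ℕ) (χ : Fin (n + 1) → ℕ) (k : ℕ) : ℕ :=
  if h : k < n + 1 then χ ⟨k, h⟩ else 1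

/-- The exponent vector of `α_k ∈ ℤⁿ` (the variable `α_k` corresponds to the `Fin n`
index `m` with `m + 1 = k`), with the convention that `α₀ = 1`, i.e. exponent `0`. -/
def avec (n : ℕ) (k : ℕ) : Fin n → ℤ :=
  fun m => if (m : ℕ) + 1 = k then 1 else 0

/-- The exponent vector of the monomial `α_l·α_k^{−χ_l/χ_k}` (convention `α₀ = 1`, so
the vector for `k = 0` is that of `α_l`, as `χ₀ = 1` for normalized `χ`). -/
def wexp (n : ℕ) (χ : Fin (n + 1) → ℕ) (k l : ℕ) : Fin n → ℤ :=
  fun m => avec n l m - ((chN n χ l / chN n χ k : ℕ) : ℤ) * avec n k m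

/-- The K-theoretic equivariant Euler class `1 − α_l·α_k^{−χ_l/χ_k}`. -/
def ekl (n : ℕ) (χ : Fin (n + 1) → ℕ) (k l : ℕ) : LaurentZ n :=
  1 - AddMonoidAlgebra.single (wexp n χ k l) 1

/-- The ideal `J_A ⊆ S^±_ℤ(α)` generated by the elements `1 − α_l·α_k^{−χ_l/χ_k}`
for all `k < l` with `k, l ∈ A`. -/
def JA (n : ℕ) (χ : Fin (n + 1) → ℕ) (A : Finset (Fin (n + 1))) : Ideal (LaurentZ n) :=
  Ideal.span {f | ∃ k l : Fin (n + 1), k ∈ A ∧ l ∈ A ∧ (k : ℕ) < (l : ℕ) ∧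
    f = ekl n χ (k : ℕ) (l : ℕ)}

lemma JA_mono (n : ℕ) (χ : Fin (n + 1) → ℕ) {A A' : Finset (Fin (n + 1))} (h : A ⊆ A') :
    JA n χ A ≤ JA n χ A' :=
  Ideal.span_mono (by rintro f ⟨k, l, hk, hl, hkl, rfl⟩; exact ⟨k, l, h hk, h hl, hkl, rfl⟩)

/-- The GKM ring `Γ`: tuples `(g₀,…,gₙ)` of Laurent polynomials such that
`1 − α_{n−j}·α_{n−i}^{−χ_{n−j}/χ_{n−i}}` divides `gᵢ − gⱼ` for all `0 ≤ j < i ≤ n`. -/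
def GammaK (n : ℕ) (χ : Fin (n + 1) → ℕ) : Subring (Fin (n + 1) → LaurentZ n) where
  carrier := {g | ∀ i j : Fin (n + 1), (j : ℕ) < (i : ℕ) →
    ekl n χ (n - (i : ℕ)) (n - (j : ℕ)) ∣ g i - g j}
  zero_mem' := by intro i j _; simp
  one_mem' := by intro i j _; simp
  add_mem' := by
    intro a b ha hb i j hij
    simpa [add_sub_add_comm] using dvd_add (ha i j hij) (hb i j hij)
  neg_mem' := by
    intro a ha i j hij
    simpa [neg_sub_neg, ← sub_eq_neg_add] using (ha i j hij).neg_right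
  mul_mem' := by
    intro a b ha hb i j hij
    have e : a i * b i - a j * b j = (a i - a j) * b i + a j * (b i - b j) := by ring
    have : ekl n χ (n - (i : ℕ)) (n - (j : ℕ)) ∣ a i * b i - a j * b j := by
      rw [e]; exact dvd_add ((ha i j hij).mul_right _) ((hb i j hij).mul_left _)
    simpa using this

/-- The nonempty subsets of `{0,…,n}`, indexing the cones of the fan `Σ_χ`. -/
abbrev NESet (n : ℕ) := {A : Finset (Fin (n + 1)) // A.Nonempty}

/-- The ring `P_K(α;Σ_χ)` of integral piecewise Laurent polynomials on the fan `Σ_χ`: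
families `(f_A)` over the nonempty `A ⊆ {0,…,n}`, with `f_A ∈ S^±_ℤ(α)/J_A`,
compatible under the projections `S^±_ℤ(α)/J_A → S^±_ℤ(α)/J_{A'}` for `A ⊆ A'`. -/
def PKring (n : ℕ) (χ : Fin (n + 1) → ℕ) :
    Subring (Π A : NESet n, LaurentZ n ⧸ JA n χ A.1) where
  carrier := {f | ∀ (A A' : NESet n) (h : A.1 ⊆ A'.1),
    Ideal.Quotient.factor (JA_mono n χ h) (f A) = f A'}
  zero_mem' := by intro A A' h; simp only [Pi.zero_apply, map_zero]
  one_mem' := by intro A A' h; simp only [Pi.one_apply, map_one]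
  add_mem' := by
    intro a b ha hb A A' h
    simp only [Pi.add_apply, map_add, ha A A' h, hb A A' h]
  neg_mem' := by
    intro a ha A A' h
    simp only [Pi.neg_apply, map_neg, ha A A' h]
  mul_mem' := by
    intro a b ha hb A A' h
    simp only [Pi.mul_apply, map_mul, ha A A' h, hb A A' h]

/-- The index reversal `a ↦ n - a` on `Fin (n+1)`. -/
def revFin (n : ℕ) (a : Fin (n + 1)) : Fin (n + 1) :=
  ⟨n - (a : ℕ), Nat.lt_succ_of_le (Nat.sub_le n _)⟩

lemma revFin_revFin (n : ℕ) (a : Fin (n + 1)) : revFin n (revFin n a) = a := by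
  have := a.isLt
  apply Fin.ext
  simp only [revFin]
  omega

lemma key_lt (n : ℕ) (χ : Fin (n + 1) → ℕ) (g : Fin (n + 1) → LaurentZ n)
    (hg : g ∈ GammaK n χ) (A : Finset (Fin (n + 1))) (a a' : Fin (n + 1))
    (ha : a ∈ A) (ha' : a' ∈ A) (hlt : (a : ℕ) < (a' : ℕ)) :
    Ideal.Quotient.mk (JA n χ A) (g (revFin n a)) =
      Ideal.Quotient.mk (JA n χ A) (g (revFin n a')) := by
  have hi := a.isLt
  have hi' := a'.isLt
  have hij : ((revFin n a' : Fin (n + 1)) : ℕ) < ((revFin n a : Fin (n + 1)) : ℕ) := by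
    simp only [revFin]; omega
  have hd := hg (revFin n a) (revFin n a') hij
  have e1 : n - ((revFin n a : Fin (n + 1)) : ℕ) = (a : ℕ) := by
    simp only [revFin]; omega
  have e2 : n - ((revFin n a' : Fin (n + 1)) : ℕ) = (a' : ℕ) := by
    simp only [revFin]; omega
  rw [e1, e2] at hd
  obtain ⟨c, hc⟩ := hd
  refine Ideal.Quotient.eq.mpr ?_
  rw [hc]
  exact Ideal.mul_mem_right _ _ (Ideal.subset_span ⟨a, a', ha, ha', hlt, rfl⟩)

lemma key (n : ℕ) (χ : Fin (n + 1) → ℕ) (g : Fin (n + 1) → LaurentZ n)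
    (hg : g ∈ GammaK n χ) (A : Finset (Fin (n + 1))) (a a' : Fin (n + 1))
    (ha : a ∈ A) (ha' : a' ∈ A) :
    Ideal.Quotient.mk (JA n χ A) (g (revFin n a)) =
      Ideal.Quotient.mk (JA n χ A) (g (revFin n a')) := by
  rcases lt_trichotomy (a : ℕ) (a' : ℕ) with h | h | h
  · exact key_lt n χ g hg A a a' ha ha' h
  · rw [Fin.ext h]
  · exact (key_lt n χ g hg A a' a ha' ha h).symm

lemma JA_singleton (n : ℕ) (χ : Fin (n + 1) → ℕ) (a : Fin (n + 1)) :
    JA n χ {a} = ⊥ := by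
  refine le_bot_iff.mp ?_
  rw [JA, Ideal.span_le]
  rintro f ⟨k, l, hk, hl, hkl, rfl⟩
  rw [Finset.mem_singleton] at hk hl
  subst hk; subst hl
  exact absurd hkl (lt_irrefl _)

lemma JA_pair_le (n : ℕ) (χ : Fin (n + 1) → ℕ) (k l : Fin (n + 1)) (hkl : (k : ℕ) < (l : ℕ)) :
    JA n χ {k, l} ≤ Ideal.span {ekl n χ (k : ℕ) (l : ℕ)} := by
  rw [JA, Ideal.span_le]
  rintro f ⟨k', l', hk', hl', h', rfl⟩
  rw [Finset.mem_insert, Finset.mem_singleton] at hk' hl'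
  rcases hk' with rfl | rfl <;> rcases hl' with rfl | rfl
  · exact absurd h' (lt_irrefl _)
  · exact Ideal.subset_span rfl
  · omega
  · exact absurd h' (lt_irrefl _)

/-- The map `Γ → P_K(α;Σ_χ)`. -/
def toPK (n : ℕ) (χ : Fin (n + 1) → ℕ) (g : GammaK n χ) : PKring n χ :=
  ⟨fun A => Ideal.Quotient.mk (JA n χ A.1) (g.1 (revFin n (A.1.min' A.2))), by
    intro A A' h
    rw [Ideal.Quotient.factor_mk]
    exact key n χ g.1 g.2 A'.1 _ _ (h (A.1.min'_mem A.2)) (A'.1.min'_mem A'.2)⟩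

/-- The ring homomorphism `Γ → P_K(α;Σ_χ)`. -/
def HPK (n : ℕ) (χ : Fin (n + 1) → ℕ) : GammaK n χ →+* PKring n χ where
  toFun := toPK n χ
  map_one' := by
    apply Subtype.ext; funext A
    simp [toPK]
  map_mul' := fun a b => by
    apply Subtype.ext; funext A
    simp [toPK]
  map_zero' := by
    apply Subtype.ext; funext A
    simp [toPK]
  map_add' := fun a b => by
    apply Subtype.ext; funext A
    simp [toPK]

lemma HPK_injective (n : ℕ) (χ : Fin (n + 1) → ℕ) : Function.Injective (HPK n χ) := by
  intro g g' h
  apply Subtype.ext; funext i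
  have hA : (HPK n χ g).1 ⟨{revFin n i}, Finset.singleton_nonempty _⟩ =
      (HPK n χ g').1 ⟨{revFin n i}, Finset.singleton_nonempty _⟩ := by rw [h]
  simp only [HPK, RingHom.coe_mk, MonoidHom.coe_mk, OneHom.coe_mk, toPK,
    Finset.min'_singleton] at hA
  rw [revFin_revFin] at hA
  have := Ideal.Quotient.eq.mp hA
  rw [JA_singleton, Ideal.mem_bot, sub_eq_zero] at this
  exact this

lemma HPK_surjective (n : ℕ) (χ : Fin (n + 1) → ℕ) : Function.Surjective (HPK n χ) := by
  intro f
  -- choose representatives over singletons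
  have hrep : ∀ i : Fin (n + 1), ∃ x : LaurentZ n,
      Ideal.Quotient.mk (JA n χ {revFin n i}) x =
        f.1 ⟨{revFin n i}, Finset.singleton_nonempty _⟩ :=
    fun i => Ideal.Quotient.mk_surjective _
  choose g hgspec using hrep
  have hmkA : ∀ (i : Fin (n + 1)) (A : NESet n) (h : revFin n i ∈ A.1),
      Ideal.Quotient.mk (JA n χ A.1) (g i) = f.1 A := by
    intro i A h
    have hsub : ({revFin n i} : Finset (Fin (n + 1))) ⊆ A.1 :=
      Finset.singleton_subset_iff.mpr h
    have := f.2 ⟨{revFin n i}, Finset.singleton_nonempty _⟩ A hsub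
    rw [← this, ← hgspec i, Ideal.Quotient.factor_mk]
  have hg : g ∈ GammaK n χ := by
    intro i j hij
    have hi := i.isLt
    have hj := j.isLt
    set k := revFin n i with hk
    set l := revFin n j with hl
    have hkl : (k : ℕ) < (l : ℕ) := by simp only [hk, hl, revFin]; omega
    have hkmem : k ∈ ({k, l} : Finset (Fin (n + 1))) := Finset.mem_insert_self _ _
    have hlmem : l ∈ ({k, l} : Finset (Fin (n + 1))) :=
      Finset.mem_insert_of_mem (Finset.mem_singleton_self _)
    have hA : NESet n := ⟨{k, l}, ⟨k, hkmem⟩⟩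
    have h1 := hmkA i ⟨{k, l}, ⟨k, hkmem⟩⟩ hkmem
    have h2 := hmkA j ⟨{k, l}, ⟨k, hkmem⟩⟩ hlmem
    have hmem : g i - g j ∈ JA n χ {k, l} := Ideal.Quotient.eq.mp (h1.trans h2.symm)
    have := JA_pair_le n χ k l hkl hmem
    rw [Ideal.mem_span_singleton] at this
    exact this
  refine ⟨⟨g, hg⟩, ?_⟩
  apply Subtype.ext; funext A
  show Ideal.Quotient.mk (JA n χ A.1) (g (revFin n (A.1.min' A.2))) = f.1 A
  have hm : revFin n (revFin n (A.1.min' A.2)) ∈ A.1 := by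
    rw [revFin_revFin]; exact A.1.min'_mem A.2
  exact hmkA (revFin n (A.1.min' A.2)) A hm

/-- **Algebraic core of Theorem 5.2(1).**
For a normalized divisive weight vector `χ`, the map sending `g ∈ Γ` to the family
whose component at a nonempty `A ⊆ {0,…,n}` is the class of `g_{n − min A}` in
`S^±_ℤ(α)/J_A` is well defined (`g_{n−a} ≡ g_{n−a′}` mod `J_A` for all `a, a′ ∈ A`)
and is a ring isomorphism from `Γ` onto the ring `P_K(α;Σ_χ)` of integral piecewise
Laurent polynomials on `Σ_χ`. -/
theorem gamma_iso_piecewise_laurent (n : ℕ) (χ : Fin (n + 1) → ℕ)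
    (hpos : ∀ j, 0 < χ j)
    (hdiv : ∀ j : Fin n, χ j.castSucc ∣ χ j.succ)
    (hnorm : ∀ j : Fin (n + 1), Finset.gcd (Finset.univ.erase j) χ = 1) :
    (∀ g ∈ GammaK n χ, ∀ A : Finset (Fin (n + 1)), A.Nonempty →
      ∀ a ∈ A, ∀ a' ∈ A,
        Ideal.Quotient.mk (JA n χ A)
            (g ⟨n - (a : ℕ), Nat.lt_succ_of_le (Nat.sub_le n _)⟩) =
          Ideal.Quotient.mk (JA n χ A)
            (g ⟨n - (a' : ℕ), Nat.lt_succ_of_le (Nat.sub_le n _)⟩)) ∧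
    ∃ φ : GammaK n χ ≃+* PKring n χ,
      ∀ (g : GammaK n χ) (A : NESet n),
        (φ g).1 A = Ideal.Quotient.mk (JA n χ A.1)
          (g.1 ⟨n - (A.1.min' A.2 : ℕ), Nat.lt_succ_of_le (Nat.sub_le n _)⟩) := by
  constructor
  · intro g hg A _ a ha a' ha'
    exact key n χ g hg A a a' ha ha'
  · refine ⟨RingEquiv.ofBijective (HPK n χ) ⟨HPK_injective n χ, HPK_surjective n χ⟩, ?_⟩
    intro g A
    rfl
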